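/- Let I be a countable set and P a row-stochastic matrix on I which is irreducible and aperiodic and admits an invariant probability distribution π. Then for any initial probability distribution λ on I and any state j ∈ I, the quantity Σ_{i∈I} λ_i (P^n)(i,j) converges to π_j as n → ∞. In particular, (P^n)(i,j) → π_j for all states i, j. -/

import Mathlib

lemma nsmul_mem_of_addclosed {S : Set ℕ} (hadd : ∀ a ∈ S, ∀ b ∈ S, a + b ∈ S)
    {s : ℕ} (hs : s ∈ S) : ∀ k : ℕ, 1 ≤ k → k * s ∈ S := by
  intro k hk
  induction k with
  | zero => omega
  | succ n ih =>
    rcases Nat.eq_or_lt_of_le hk with h | h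
    · simpa [← h] using hs
    · have hn : 1 ≤ n := by omega
      have := hadd _ (ih hn) _ hs
      simpa [Nat.succ_mul] using this

lemma addclosed_gcd_one_cofinite (S : Set ℕ)
    (h1 : ∀ n ∈ S, 1 ≤ n)
    (hadd : ∀ a ∈ S, ∀ b ∈ S, a + b ∈ S)
    (hne : S.Nonempty)
    (hgcd : ∀ d : ℕ, (∀ n ∈ S, d ∣ n) → d = 1) :
    ∃ N : ℕ, ∀ n, N ≤ n → n ∈ S := by
  classical
  set S₀ : Set ℕ := insert 0 S with hS₀
  have hS₀add : ∀ a ∈ S₀, ∀ b ∈ S₀, a + b ∈ S₀ := by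
    rintro a (rfl | ha) b (rfl | hb)
    · simp [hS₀]
    · simp only [zero_add]; exact Set.mem_insert_of_mem _ hb
    · simp only [add_zero]; exact Set.mem_insert_of_mem _ ha
    · exact Set.mem_insert_of_mem _ (hadd _ ha _ hb)
  have hS₀smul : ∀ k : ℕ, ∀ s ∈ S₀, k * s ∈ S₀ := by
    rintro k s (rfl | hs)
    · simp [hS₀]
    · rcases Nat.eq_zero_or_pos k with rfl | hk
      · simp [hS₀]
      · exact Set.mem_insert_of_mem _ (nsmul_mem_of_addclosed hadd hs k hk)
  set D : Set ℕ := {d | 0 < d ∧ ∃ x ∈ S₀, ∃ y ∈ S₀, x = y + d} with hD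
  obtain ⟨a, ha⟩ := hne
  have haD : a ∈ D := ⟨h1 a ha, a, Set.mem_insert_of_mem _ ha, 0, Set.mem_insert _ _, by omega⟩
  have hDne : D.Nonempty := ⟨a, haD⟩
  have hd₀ : sInf D ∈ D := Nat.sInf_mem hDne
  set d₀ := sInf D with hd₀def
  obtain ⟨hd₀pos, x, hx, y, hy, hxy⟩ := hd₀
  -- d₀ divides every element of S
  have hdvd : ∀ n ∈ S, d₀ ∣ n := by
    intro n hn
    by_contra hnd
    have hr : n % d₀ ≠ 0 := fun h => hnd (Nat.dvd_of_mod_eq_zero h)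
    have hrD : n % d₀ ∈ D := by
      refine ⟨Nat.pos_of_ne_zero hr, n + (n / d₀) * y, ?_, (n / d₀) * x, ?_, ?_⟩
      · exact hS₀add _ (Set.mem_insert_of_mem _ hn) _ (hS₀smul _ _ hy)
      · exact hS₀smul _ _ hx
      · have h := Nat.div_add_mod n d₀
        rw [hxy, Nat.mul_add, Nat.mul_comm (n / d₀) d₀]
        omega
    have := Nat.sInf_le hrD
    have hlt := Nat.mod_lt n hd₀pos
    omega
  have hd₀1 : d₀ = 1 := hgcd d₀ hdvd
  rw [hd₀1] at hxy
  rcases hy with rfl | hyS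
  · -- 1 ∈ S
    have h1S : (1 : ℕ) ∈ S := by
      have : x ∈ S₀ := hx
      rcases this with h | h
      · omega
      · rwa [hxy, zero_add] at h
    exact ⟨1, fun n hn => by simpa using nsmul_mem_of_addclosed hadd h1S n hn⟩
  · have hxS : x ∈ S := by
      rcases hx with h | h
      · omega
      · exact h
    set m := y with hm
    have hm1 : 1 ≤ m := h1 _ hyS
    have hmp1 : m + 1 ∈ S := by rwa [← hxy]
    refine ⟨m * m, fun n hn => ?_⟩
    set q := n / m with hq
    set r := n % m with hr
    have hdm : n = m * q + r := (Nat.div_add_mod n m).symm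
    have hrm : r < m := Nat.mod_lt n hm1
    have hqm : m ≤ q := by
      rw [hq]
      exact Nat.le_div_iff_mul_le (by omega) |>.2 (by omega)
    obtain ⟨t, ht⟩ : ∃ t, q = r + t := ⟨q - r, by omega⟩
    have ht1 : 1 ≤ t := by omega
    have hkey : n = t * m + r * (m + 1) := by rw [hdm, ht]; ring
    rcases Nat.eq_zero_or_pos r with hr0 | hrpos
    · have hn' : n = t * m := by rw [hkey, hr0]; ring
      rw [hn']
      exact nsmul_mem_of_addclosed hadd hyS _ ht1
    · rw [hkey]
      exact hadd _ (nsmul_mem_of_addclosed hadd hyS _ ht1) _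
        (nsmul_mem_of_addclosed hadd hmp1 _ hrpos)

open Filter ENNReal Topology
open scoped Classical

noncomputable def kpow {J : Type*} (K : J → J → ℝ≥0∞) : ℕ → J → J → ℝ≥0∞
  | 0 => fun x y => if x = y then 1 else 0
  | (n+1) => fun x y => ∑' z, kpow K n x z * K z y

lemma kpow_succ {J : Type*} (K : J → J → ℝ≥0∞) (n : ℕ) (x y : J) :
    kpow K (n+1) x y = ∑' z, kpow K n x z * K z y := rfl

lemma kpow_zero {J : Type*} (K : J → J → ℝ≥0∞) (x y : J) :
    kpow K 0 x y = if x = y then 1 else 0 := rfl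

noncomputable def taboo {J : Type*} (K : J → J → ℝ≥0∞) (b : J) : ℕ → J → J → ℝ≥0∞
  | 0 => fun x y => if x = y then 1 else 0
  | (n+1) => fun x y => if y = b then 0 else ∑' z, taboo K b n x z * K z y

lemma taboo_succ {J : Type*} (K : J → J → ℝ≥0∞) (b : J) (n : ℕ) (x y : J) :
    taboo K b (n+1) x y = if y = b then 0 else ∑' z, taboo K b n x z * K z y := rfl

lemma taboo_zero {J : Type*} (K : J → J → ℝ≥0∞) (b : J) (x y : J) :
    taboo K b 0 x y = if x = y then 1 else 0 := rfl

noncomputable def usurv {J : Type*} (K : J → J → ℝ≥0∞) (b : J) (n : ℕ) (x : J) : ℝ≥0∞ :=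
  ∑' y, taboo K b n x y

section chain

variable {J : Type*} (K : J → J → ℝ≥0∞) (b : J)

lemma tsum_ite_mul_eq (x : J) (f : J → ℝ≥0∞) :
    ∑' z, (if x = z then (1:ℝ≥0∞) else 0) * f z = f x := by
  rw [tsum_eq_single x]
  · simp
  · intro z hz
    simp [Ne.symm hz]

lemma kpow_one (i j : J) : kpow K 1 i j = K i j := by
  show ∑' z, kpow K 0 i z * K z j = K i j
  exact tsum_ite_mul_eq i _

variable (hK : ∀ x, ∑' y, K x y = 1)
include hK

lemma kpow_row (n : ℕ) (x : J) : ∑' y, kpow K n x y = 1 := by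
  induction n with
  | zero =>
    show (∑' y, if x = y then (1:ℝ≥0∞) else 0) = 1
    rw [tsum_eq_single x] <;> simp +contextual [Ne.symm]
  | succ n ih =>
    show ∑' y, ∑' z, kpow K n x z * K z y = 1
    rw [ENNReal.tsum_comm]
    calc ∑' z, ∑' y, kpow K n x z * K z y
        = ∑' z, kpow K n x z * ∑' y, K z y := by
          congr 1; ext z; rw [ENNReal.tsum_mul_left]
      _ = 1 := by simp_rw [hK]; simpa using ih

lemma kpow_le_one (n : ℕ) (x y : J) : kpow K n x y ≤ 1 := by
  rw [← kpow_row K hK n x]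
  exact ENNReal.le_tsum y

omit hK in
lemma kpow_add (m n : ℕ) (x y : J) :
    kpow K (m + n) x y = ∑' z, kpow K m x z * kpow K n z y := by
  induction n generalizing y with
  | zero =>
    simp only [Nat.add_zero, kpow]
    rw [tsum_eq_single y]
    · show kpow K m x y = kpow K m x y * kpow K 0 y y
      simp [kpow]
    · intro z hz
      simp [hz]
  | succ n ih =>
    show ∑' z, kpow K (m+n) x z * K z y = _
    calc ∑' z, kpow K (m+n) x z * K z y
        = ∑' z, (∑' w, kpow K m x w * kpow K n w z) * K z y := by simp_rw [ih]
      _ = ∑' z, ∑' w, kpow K m x w * kpow K n w z * K z y := by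
          congr 1; ext z; rw [ENNReal.tsum_mul_right]
      _ = ∑' w, ∑' z, kpow K m x w * (kpow K n w z * K z y) := by
          rw [ENNReal.tsum_comm]; simp_rw [mul_assoc]
      _ = ∑' w, kpow K m x w * kpow K (n+1) w y := by
          congr 1; ext w; rw [ENNReal.tsum_mul_left]; rfl

omit hK in
lemma taboo_one (x y : J) : taboo K b 1 x y = if y = b then 0 else K x y := by
  show (if y = b then 0 else ∑' z, taboo K b 0 x z * K z y) = _
  by_cases h : y = b
  · simp [h]
  · simp only [h, if_false]
    exact tsum_ite_mul_eq x _

omit hK in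
lemma taboo_add (m n : ℕ) (x y : J) :
    taboo K b (m + n) x y = ∑' z, taboo K b m x z * taboo K b n z y := by
  induction n generalizing y with
  | zero =>
    simp only [Nat.add_zero]
    rw [tsum_eq_single y]
    · show taboo K b m x y = taboo K b m x y * taboo K b 0 y y
      simp [taboo]
    · intro z hz
      have : taboo K b 0 z y = 0 := by simp [taboo, hz]
      rw [this, mul_zero]
  | succ n ih =>
    show (if y = b then 0 else ∑' z, taboo K b (m+n) x z * K z y) = _
    by_cases hy : y = b
    · simp only [hy, if_true]
      symm
      have : ∀ z, taboo K b m x z * taboo K b (n+1) z b = 0 := by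
        intro z
        have : taboo K b (n+1) z b = 0 := by simp [taboo]
        rw [this, mul_zero]
      simp_rw [this]
      simp
    · simp only [hy, if_false]
      calc ∑' z, taboo K b (m+n) x z * K z y
          = ∑' z, (∑' w, taboo K b m x w * taboo K b n w z) * K z y := by simp_rw [ih]
        _ = ∑' z, ∑' w, taboo K b m x w * taboo K b n w z * K z y := by
            congr 1; ext z; rw [ENNReal.tsum_mul_right]
        _ = ∑' w, ∑' z, taboo K b m x w * (taboo K b n w z * K z y) := by
            rw [ENNReal.tsum_comm]; simp_rw [mul_assoc]
        _ = ∑' w, taboo K b m x w * (∑' z, taboo K b n w z * K z y) := by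
            congr 1; ext w; rw [ENNReal.tsum_mul_left]
        _ = ∑' w, taboo K b m x w * taboo K b (n+1) w y := by
            congr 1; ext w
            congr 1
            show _ = if y = b then 0 else ∑' z, taboo K b n w z * K z y
            simp [hy]

omit hK in
lemma taboo_le_kpow (n : ℕ) (x y : J) : taboo K b n x y ≤ kpow K n x y := by
  induction n generalizing y with
  | zero => exact le_refl _
  | succ n ih =>
    show (if y = b then 0 else ∑' z, taboo K b n x z * K z y) ≤ ∑' z, kpow K n x z * K z y
    by_cases h : y = b
    · simp [h]
    · simp only [h, if_false]
      exact ENNReal.tsum_le_tsum fun z => mul_le_mul_left (ih z) _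

lemma usurv_le_one (n : ℕ) (x : J) : usurv K b n x ≤ 1 := by
  rw [← kpow_row K hK n x]
  exact ENNReal.tsum_le_tsum fun y => taboo_le_kpow K b n x y

omit hK in
lemma usurv_add (m n : ℕ) (x : J) :
    usurv K b (m + n) x = ∑' z, taboo K b m x z * usurv K b n z := by
  unfold usurv
  simp_rw [taboo_add K b m n x]
  rw [ENNReal.tsum_comm]
  congr 1; ext z
  rw [ENNReal.tsum_mul_left]

lemma usurv_antitone (x : J) : Antitone (fun n => usurv K b n x) := by
  refine antitone_nat_of_succ_le fun n => ?_
  calc usurv K b (n+1) x = ∑' z, taboo K b n x z * usurv K b 1 z := usurv_add K b n 1 x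
    _ ≤ ∑' z, taboo K b n x z * 1 :=
        ENNReal.tsum_le_tsum fun z => mul_le_mul_right (usurv_le_one K b hK 1 z) _
    _ = usurv K b n x := by simp [usurv]

omit hK in
lemma exists_taboo_pos : ∀ n x, x ≠ b → 0 < kpow K n b x → ∃ m, 0 < taboo K b m b x := by
  intro n
  induction n with
  | zero =>
    intro x hx h
    exfalso
    have : kpow K 0 b x = 0 := by simp [kpow, Ne.symm hx]
    rw [this] at h
    exact lt_irrefl 0 h
  | succ n ih =>
    intro x hx h
    have hex : ∃ z, 0 < kpow K n b z * K z x := by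
      by_contra hc
      push_neg at hc
      have hz0 : ∀ z, kpow K n b z * K z x = 0 :=
        fun z => le_antisymm (hc z) zero_le
      have h0 : kpow K (n+1) b x = 0 := by
        show (∑' z, kpow K n b z * K z x) = 0
        simp [hz0]
      rw [h0] at h
      exact lt_irrefl 0 h
    obtain ⟨z, hz⟩ := hex
    obtain ⟨hz1, hz2⟩ := CanonicallyOrderedAdd.mul_pos.mp hz
    by_cases hzb : z = b
    · refine ⟨1, ?_⟩
      rw [taboo_one K b]
      simp only [hx, if_false]
      rw [← hzb]
      exact hz2
    · obtain ⟨m, hm⟩ := ih z hzb hz1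
      refine ⟨m + 1, ?_⟩
      show 0 < if x = b then 0 else ∑' w, taboo K b m b w * K w x
      simp only [hx, if_false]
      calc (0:ℝ≥0∞) < taboo K b m b z * K z x :=
            CanonicallyOrderedAdd.mul_pos.mpr ⟨hm, hz2⟩
        _ ≤ ∑' w, taboo K b m b w * K w x := ENNReal.le_tsum z

theorem usurv_tendsto_zero (μ : J → ℝ≥0∞) (hμ1 : ∑' x, μ x = 1)
    (hμinv : ∀ y, ∑' x, μ x * K x y = μ y) (hb : 0 < μ b)
    (hreach : ∀ x, x ≠ b → ∃ n, 0 < kpow K n b x) :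
    ∀ x, Tendsto (fun n => usurv K b n x) atTop (𝓝 0) := by
  have hμle : ∀ x, μ x ≤ 1 := fun x => hμ1 ▸ ENNReal.le_tsum x
  have hμfin : μ b ≠ ⊤ := fun h => by simpa [h] using hμle b
  set S : ℕ → ℝ≥0∞ := fun n => ∑' x, μ x * usurv K b n x with hS
  have hS_le : ∀ n, S n ≤ 1 := by
    intro n
    calc S n ≤ ∑' x, μ x * 1 :=
          ENNReal.tsum_le_tsum fun x => mul_le_mul_right (usurv_le_one K b hK n x) _
      _ = 1 := by simpa using hμ1
  have key : ∀ n, S (n+1) + μ b * usurv K b n b = S n := by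
    intro n
    have h1 : ∀ x, usurv K b (n+1) x = ∑' z, taboo K b 1 x z * usurv K b n z := by
      intro x
      have := usurv_add K b 1 n x
      rwa [Nat.add_comm 1 n] at this
    have h2 : ∀ z, (∑' x, μ x * taboo K b 1 x z) = if z = b then 0 else μ z := by
      intro z
      simp_rw [taboo_one K b]
      by_cases hz : z = b
      · simp [hz]
      · simp only [hz, if_false]
        exact hμinv z
    have h3 : S (n+1) = ∑' z, (if z = b then 0 else μ z) * usurv K b n z := by
      calc S (n+1) = ∑' x, μ x * ∑' z, taboo K b 1 x z * usurv K b n z := by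
            simp only [hS]; congr 1; ext x; rw [h1 x]
        _ = ∑' x, ∑' z, μ x * taboo K b 1 x z * usurv K b n z := by
            congr 1; ext x; rw [← ENNReal.tsum_mul_left]; simp_rw [mul_assoc]
        _ = ∑' z, (∑' x, μ x * taboo K b 1 x z) * usurv K b n z := by
            rw [ENNReal.tsum_comm]; congr 1; ext z; rw [ENNReal.tsum_mul_right]
        _ = _ := by simp_rw [h2]
    rw [h3]
    have h4 : ∀ z, (if z = b then 0 else μ z) * usurv K b n z
        = if z = b then 0 else μ z * usurv K b n z := by
      intro z; by_cases hz : z = b <;> simp [hz]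
    simp_rw [h4]
    rw [add_comm, hS]
    show μ b * usurv K b n b + _ = ∑' x, μ x * usurv K b n x
    exact (ENNReal.tsum_eq_add_tsum_ite (f := fun z => μ z * usurv K b n z) b).symm
  have hpartial : ∀ N, (∑ n ∈ Finset.range N, μ b * usurv K b n b) + S N = S 0 := by
    intro N
    induction N with
    | zero => simp
    | succ N ihN =>
      rw [Finset.sum_range_succ, add_assoc, add_comm (μ b * usurv K b N b) (S (N+1)), key N]
      exact ihN
  have hsumfin : (∑' n, μ b * usurv K b n b) ≠ ⊤ := by
    have hle : (∑' n, μ b * usurv K b n b) ≤ 1 := by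
      rw [ENNReal.tsum_eq_iSup_sum]
      refine iSup_le fun s => ?_
      obtain ⟨N, hN⟩ := s.exists_nat_subset_range
      calc ∑ n ∈ s, μ b * usurv K b n b ≤ ∑ n ∈ Finset.range N, μ b * usurv K b n b :=
            Finset.sum_le_sum_of_subset hN
        _ ≤ S 0 := le_of_add_le_left (le_of_eq (hpartial N))
        _ ≤ 1 := hS_le 0
    exact fun h => by simp [h] at hle
  have hub : Tendsto (fun n => μ b * usurv K b n b) atTop (𝓝 0) :=
    ENNReal.tendsto_atTop_zero_of_tsum_ne_top hsumfin
  have hb0 : Tendsto (fun n => usurv K b n b) atTop (𝓝 0) := by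
    have heq : ∀ n, usurv K b n b = (μ b)⁻¹ * (μ b * usurv K b n b) := by
      intro n
      rw [← mul_assoc, ENNReal.inv_mul_cancel hb.ne' hμfin, one_mul]
    have := ENNReal.Tendsto.const_mul hub (Or.inr (ENNReal.inv_ne_top.2 hb.ne'))
    rw [mul_zero] at this
    exact this.congr fun n => (heq n).symm
  intro x
  by_cases hx : x = b
  · subst hx; exact hb0
  obtain ⟨n, hn⟩ := hreach x hx
  obtain ⟨m, hm⟩ := exists_taboo_pos K b n x hx hn
  have hmfin : taboo K b m b x ≠ ⊤ := by
    have h1 : taboo K b m b x ≤ 1 := le_trans (taboo_le_kpow K b m b x) (kpow_le_one K hK m b x)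
    exact fun h => by simp [h] at h1
  have hbound : ∀ k, usurv K b k x ≤ (taboo K b m b x)⁻¹ * usurv K b (m + k) b := by
    intro k
    have h1 : taboo K b m b x * usurv K b k x ≤ usurv K b (m + k) b := by
      rw [usurv_add K b m k b]
      exact ENNReal.le_tsum x
    calc usurv K b k x = (taboo K b m b x)⁻¹ * (taboo K b m b x * usurv K b k x) := by
          rw [← mul_assoc, ENNReal.inv_mul_cancel hm.ne' hmfin, one_mul]
      _ ≤ _ := mul_le_mul_right h1 _
  have htail : Tendsto (fun k => (taboo K b m b x)⁻¹ * usurv K b (m + k) b) atTop (𝓝 0) := by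
    have hcomp : Tendsto (fun k => usurv K b (m + k) b) atTop (𝓝 0) := by
      have := hb0.comp (tendsto_add_atTop_nat m)
      simpa [Function.comp_def, Nat.add_comm] using this
    have := ENNReal.Tendsto.const_mul hcomp (Or.inr (ENNReal.inv_ne_top.2 hm.ne'))
    rwa [mul_zero] at this
  exact tendsto_of_tendsto_of_tendsto_of_le_of_le tendsto_const_nhds htail
    (fun k => zero_le) hbound

end chain


lemma prodsum {α β : Type*} (f : α → ℝ≥0∞) (g : β → ℝ≥0∞) :
    ∑' (y : α × β), f y.1 * g y.2 = (∑' a, f a) * (∑' b, g b) := by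
  rw [ENNReal.tsum_prod' (f := fun y => f y.1 * g y.2)]
  simp_rw [ENNReal.tsum_mul_left]
  rw [ENNReal.tsum_mul_right]

lemma tsum_weighted_tendsto_zero {α : Type*} (w : α → ℝ≥0∞) (hw : ∑' x, w x = 1)
    (g : ℕ → α → ℝ≥0∞) (hg1 : ∀ n x, g n x ≤ 1)
    (hg : ∀ x, Tendsto (fun n => g n x) atTop (𝓝 0)) :
    Tendsto (fun n => ∑' x, w x * g n x) atTop (𝓝 0) := by
  have hwle : ∀ x, w x ≤ 1 := fun x => hw ▸ ENNReal.le_tsum x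
  rw [ENNReal.tendsto_atTop_zero]
  intro ε hε
  rcases le_or_gt 1 ε with hε1 | hε1
  · refine ⟨0, fun n _ => le_trans (le_trans
      (ENNReal.tsum_le_tsum fun x => mul_le_mul_right (hg1 n x) _) ?_) hε1⟩
    simp [hw]
  · have hε2 : (0:ℝ≥0∞) < ε/2 := ENNReal.half_pos hε.ne'
    have h1 : (1 : ℝ≥0∞) - ε/2 < 1 :=
      ENNReal.sub_lt_self ENNReal.one_ne_top one_ne_zero hε2.ne'
    obtain ⟨s, hs⟩ : ∃ s : Finset α, 1 - ε/2 < ∑ x ∈ s, w x := by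
      have h2 : (⨆ s : Finset α, ∑ x ∈ s, w x : ℝ≥0∞) = 1 := by
        rw [← ENNReal.tsum_eq_iSup_sum]; exact hw
      have h1' : (1:ℝ≥0∞) - ε/2 < ⨆ s : Finset α, ∑ x ∈ s, w x := by rw [h2]; exact h1
      exact lt_iSup_iff.mp h1'
    have hsplit : (∑ x ∈ s, w x) + ∑' (x : ↑((↑s : Set α)ᶜ)), w ↑x = 1 := by
      rw [← hw, ← Finset.tsum_subtype]
      exact ENNReal.summable.tsum_add_tsum_compl ENNReal.summable
    have hε2le1 : ε/2 ≤ 1 := le_of_lt (lt_of_le_of_lt (ENNReal.half_le_self) hε1)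
    have htail : ∑' (x : ↑((↑s : Set α)ᶜ)), w ↑x ≤ ε/2 := by
      by_contra hc
      push_neg at hc
      have h3 : (1:ℝ≥0∞) < 1 := by
        calc (1:ℝ≥0∞) = (1 - ε/2) + ε/2 := (tsub_add_cancel_of_le hε2le1).symm
          _ < (∑ x ∈ s, w x) + ∑' (x : ↑((↑s : Set α)ᶜ)), w ↑x := ENNReal.add_lt_add hs hc
          _ = 1 := hsplit
      exact lt_irrefl _ h3
    have hfin : Tendsto (fun n => ∑ x ∈ s, g n x) atTop (𝓝 0) := by
      have h4 := tendsto_finset_sum s (fun x _ => hg x)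
      simpa using h4
    rw [ENNReal.tendsto_atTop_zero] at hfin
    obtain ⟨N, hN⟩ := hfin (ε/2) hε2
    refine ⟨N, fun n hn => ?_⟩
    have hsplit2 : (∑' x, w x * g n x)
        = (∑ x ∈ s, w x * g n x) + ∑' (x : ↑((↑s : Set α)ᶜ)), w ↑x * g n ↑x := by
      rw [← Finset.tsum_subtype]
      exact (ENNReal.summable.tsum_add_tsum_compl ENNReal.summable).symm
    calc ∑' x, w x * g n x
        = (∑ x ∈ s, w x * g n x) + ∑' (x : ↑((↑s : Set α)ᶜ)), w ↑x * g n ↑x := hsplit2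
      _ ≤ (∑ x ∈ s, g n x) + ε/2 := by
          refine add_le_add (Finset.sum_le_sum fun x _ => ?_)
            (le_trans (ENNReal.tsum_le_tsum fun x => ?_) htail)
          · calc w x * g n x ≤ 1 * g n x := mul_le_mul_left (hwle x) _
              _ = g n x := one_mul _
          · calc w ↑x * g n ↑x ≤ w ↑x * 1 := mul_le_mul_right (hg1 n ↑x) _
              _ = w ↑x := mul_one _
      _ ≤ ε/2 + ε/2 := add_le_add_left (hN n hn) _
      _ = ε := ENNReal.add_halves ε

theorem markov_convergence_to_invariant
    {I : Type*} [Countable I]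
    (P : I → I → ℝ)
    (hP_nonneg : ∀ i j, 0 ≤ P i j)
    (hP_row : ∀ i, ∑' j, P i j = 1)
    (Pp : ℕ → I → I → ℝ)
    (hPp_one : ∀ i j, Pp 1 i j = P i j)
    (hPp_succ : ∀ n i j, Pp (n + 1) i j = ∑' k, Pp n i k * P k j)
    (hirr : ∀ i j, ∃ n, 1 ≤ n ∧ 0 < Pp n i j)
    (haper : ∀ i, ∀ d : ℕ, (∀ n, 1 ≤ n → 0 < Pp n i i → d ∣ n) → d = 1)
    (π : I → ℝ)
    (hπ_nonneg : ∀ j, 0 ≤ π j)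
    (hπ_sum : ∑' j, π j = 1)
    (hπ_inv : ∀ j, ∑' i, π i * P i j = π j) :
    (∀ lam : I → ℝ, (∀ i, 0 ≤ lam i) → ∑' i, lam i = 1 →
      ∀ j, Filter.Tendsto (fun n => ∑' i, lam i * Pp n i j)
        Filter.atTop (nhds (π j))) ∧
    (∀ i j, Filter.Tendsto (fun n => Pp n i j) Filter.atTop (nhds (π j))) := by
  classical
  -- basic real facts
  have hPsumm : ∀ i, Summable (P i) := by
    intro i
    by_contra hc
    have h := hP_row i
    rw [tsum_eq_zero_of_not_summable hc] at h
    norm_num at h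
  have hPle1 : ∀ i j, P i j ≤ 1 := by
    intro i j
    rw [← hP_row i]
    exact (hPsumm i).le_tsum j fun k _ => hP_nonneg i k
  set Pe : I → I → ℝ≥0∞ := fun i j => ENNReal.ofReal (P i j) with hPe_def
  have hPe_row : ∀ i, ∑' j, Pe i j = 1 := by
    intro i
    rw [hPe_def]
    rw [← ENNReal.ofReal_tsum_of_nonneg (hP_nonneg i) (hPsumm i), hP_row i, ENNReal.ofReal_one]
  -- the bridge between Pp and kpow Pe
  have bridge : ∀ n, 1 ≤ n →
      (∀ i j, ENNReal.ofReal (Pp n i j) = kpow Pe n i j) ∧ (∀ i j, 0 ≤ Pp n i j) := by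
    intro n hn
    induction n with
    | zero => omega
    | succ n ih =>
      by_cases hn0 : n = 0
      · subst hn0
        constructor
        · intro i j
          rw [hPp_one, kpow_one]
        · intro i j
          rw [hPp_one]
          exact hP_nonneg i j
      · have hn1 : 1 ≤ n := by omega
        obtain ⟨ihb, ihnn⟩ := ih hn1
        have hrow_e : ∀ i, ∑' k, ENNReal.ofReal (Pp n i k) = 1 := by
          intro i
          simp_rw [ihb]
          exact kpow_row Pe hPe_row n i
        have hsumm : ∀ i, Summable (fun k => Pp n i k) := by
          intro i
          have h1 : (∑' k, ENNReal.ofReal (Pp n i k)) ≠ ⊤ := by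
            rw [hrow_e i]; exact ENNReal.one_ne_top
          exact (ENNReal.summable_toReal h1).congr
            fun k => ENNReal.toReal_ofReal (ihnn i k)
        have hnn2 : ∀ i j, ∀ k, 0 ≤ Pp n i k * P k j :=
          fun i j k => mul_nonneg (ihnn i k) (hP_nonneg k j)
        have hsumm2 : ∀ i j, Summable (fun k => Pp n i k * P k j) := by
          intro i j
          refine Summable.of_nonneg_of_le (hnn2 i j) (fun k => ?_) (hsumm i)
          calc Pp n i k * P k j ≤ Pp n i k * 1 :=
                mul_le_mul_of_nonneg_left (hPle1 k j) (ihnn i k)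
            _ = Pp n i k := mul_one _
        constructor
        · intro i j
          rw [hPp_succ n i j,
            ENNReal.ofReal_tsum_of_nonneg (hnn2 i j) (hsumm2 i j), kpow_succ]
          congr 1
          ext k
          rw [ENNReal.ofReal_mul (ihnn i k), ihb]
        · intro i j
          rw [hPp_succ n i j]
          exact tsum_nonneg (hnn2 i j)
  have hPple1 : ∀ n, 1 ≤ n → ∀ i j, Pp n i j ≤ 1 := by
    intro n hn i j
    have h1 : ENNReal.ofReal (Pp n i j) ≤ 1 := by
      rw [(bridge n hn).1 i j]
      exact kpow_le_one Pe hPe_row n i j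
    rw [← ENNReal.ofReal_one] at h1
    exact (ENNReal.ofReal_le_ofReal_iff zero_le_one).mp h1
  -- π in ENNReal
  have hπsumm : Summable π := by
    by_contra hc
    rw [tsum_eq_zero_of_not_summable hc] at hπ_sum
    norm_num at hπ_sum
  set πe : I → ℝ≥0∞ := fun j => ENNReal.ofReal (π j) with hπe_def
  have hπe_sum : ∑' j, πe j = 1 := by
    rw [hπe_def, ← ENNReal.ofReal_tsum_of_nonneg hπ_nonneg hπsumm, hπ_sum, ENNReal.ofReal_one]
  have hπe_le1 : ∀ j, πe j ≤ 1 := fun j => hπe_sum ▸ ENNReal.le_tsum j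
  have hπe_inv : ∀ j, ∑' i, πe i * Pe i j = πe j := by
    intro j
    have hs : Summable (fun i => π i * P i j) := by
      refine Summable.of_nonneg_of_le (fun i => mul_nonneg (hπ_nonneg i) (hP_nonneg i j))
        (fun i => ?_) hπsumm
      calc π i * P i j ≤ π i * 1 := mul_le_mul_of_nonneg_left (hPle1 i j) (hπ_nonneg i)
        _ = π i := mul_one _
    calc ∑' i, πe i * Pe i j = ∑' i, ENNReal.ofReal (π i * P i j) := by
          congr 1; ext i; rw [ENNReal.ofReal_mul (hπ_nonneg i)]
      _ = ENNReal.ofReal (∑' i, π i * P i j) :=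
          (ENNReal.ofReal_tsum_of_nonneg
            (fun i => mul_nonneg (hπ_nonneg i) (hP_nonneg i j)) hs).symm
      _ = πe j := by rw [hπ_inv j]
  have hπe_inv_pow : ∀ n j, ∑' i, πe i * kpow Pe n i j = πe j := by
    intro n
    induction n with
    | zero =>
      intro j
      rw [tsum_eq_single j]
      · simp [kpow_zero]
      · intro i hi
        rw [kpow_zero]
        simp [hi]
    | succ n ih =>
      intro j
      simp_rw [kpow_succ]
      calc ∑' i, πe i * ∑' z, kpow Pe n i z * Pe z j
          = ∑' i, ∑' z, πe i * kpow Pe n i z * Pe z j := by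
            congr 1; ext i; rw [← ENNReal.tsum_mul_left]; simp_rw [mul_assoc]
        _ = ∑' z, (∑' i, πe i * kpow Pe n i z) * Pe z j := by
            rw [ENNReal.tsum_comm]; congr 1; ext z; rw [ENNReal.tsum_mul_right]
        _ = ∑' z, πe z * Pe z j := by simp_rw [ih]
        _ = πe j := hπe_inv j
  -- the product chain
  set K : I × I → I × I → ℝ≥0∞ := fun x y => Pe x.1 y.1 * Pe x.2 y.2 with hK_def
  have hK_row : ∀ x, ∑' y, K x y = 1 := by
    intro x
    rw [hK_def]
    rw [prodsum (fun a => Pe x.1 a) (fun b => Pe x.2 b), hPe_row, hPe_row, one_mul]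
  have hkpow_prod : ∀ n (x y : I × I),
      kpow K n x y = kpow Pe n x.1 y.1 * kpow Pe n x.2 y.2 := by
    intro n
    induction n with
    | zero =>
      intro x y
      rw [kpow_zero, kpow_zero, kpow_zero]
      by_cases h1 : x.1 = y.1 <;> by_cases h2 : x.2 = y.2 <;>
        simp [Prod.ext_iff, h1, h2]
    | succ n ih =>
      intro x y
      rw [kpow_succ, kpow_succ, kpow_succ]
      calc ∑' z, kpow K n x z * K z y
          = ∑' (z : I × I), (kpow Pe n x.1 z.1 * Pe z.1 y.1)
              * (kpow Pe n x.2 z.2 * Pe z.2 y.2) := by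
            congr 1; ext z; rw [ih, hK_def]; ring
        _ = (∑' a, kpow Pe n x.1 a * Pe a y.1) * (∑' b, kpow Pe n x.2 b * Pe b y.2) :=
            prodsum (fun a => kpow Pe n x.1 a * Pe a y.1) (fun c => kpow Pe n x.2 c * Pe c y.2)
  -- invariant measure of the product chain
  set μ : I × I → ℝ≥0∞ := fun x => πe x.1 * πe x.2 with hμ_def
  have hμ1 : ∑' x, μ x = 1 := by
    rw [hμ_def, prodsum πe πe, hπe_sum, one_mul]
  have hμinv : ∀ y, ∑' x, μ x * K x y = μ y := by
    intro y
    calc ∑' x, μ x * K x y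
        = ∑' (x : I × I), (πe x.1 * Pe x.1 y.1) * (πe x.2 * Pe x.2 y.2) := by
          congr 1; ext x; rw [hμ_def, hK_def]; ring
      _ = (∑' a, πe a * Pe a y.1) * (∑' b, πe b * Pe b y.2) :=
          prodsum (fun a => πe a * Pe a y.1) (fun c => πe c * Pe c y.2)
      _ = μ y := by rw [hπe_inv, hπe_inv, hμ_def]
  -- a state with positive mass
  obtain ⟨j₀, hj₀⟩ : ∃ j₀, 0 < π j₀ := by
    by_contra hc
    push_neg at hc
    have h0 : ∀ j, π j = 0 := fun j => le_antisymm (hc j) (hπ_nonneg j)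
    simp [h0] at hπ_sum
  set b : I × I := (j₀, j₀) with hb_def
  have hb : 0 < μ b := by
    rw [hμ_def]
    exact CanonicallyOrderedAdd.mul_pos.mpr
      ⟨ENNReal.ofReal_pos.mpr hj₀, ENNReal.ofReal_pos.mpr hj₀⟩
  -- positivity transfer
  have hpos_iff : ∀ n, 1 ≤ n → ∀ i j, (0 < kpow Pe n i j ↔ 0 < Pp n i j) := by
    intro n hn i j
    rw [← (bridge n hn).1 i j]
    exact ENNReal.ofReal_pos
  -- the set of return times
  set A : Set ℕ := {n | 1 ≤ n ∧ 0 < Pp n j₀ j₀} with hA_def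
  have hA_cof : ∃ N, ∀ n, N ≤ n → n ∈ A := by
    apply addclosed_gcd_one_cofinite
    · exact fun n hn => hn.1
    · rintro a ⟨ha1, ha2⟩ c ⟨hc1, hc2⟩
      refine ⟨by omega, ?_⟩
      rw [← hpos_iff (a + c) (by omega) j₀ j₀]
      rw [kpow_add Pe a c j₀ j₀]
      calc (0:ℝ≥0∞) < kpow Pe a j₀ j₀ * kpow Pe c j₀ j₀ :=
            CanonicallyOrderedAdd.mul_pos.mpr
              ⟨(hpos_iff a ha1 j₀ j₀).mpr ha2, (hpos_iff c hc1 j₀ j₀).mpr hc2⟩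
        _ ≤ ∑' z, kpow Pe a j₀ z * kpow Pe c z j₀ := ENNReal.le_tsum j₀
    · obtain ⟨n, hn1, hn2⟩ := hirr j₀ j₀
      exact ⟨n, hn1, hn2⟩
    · intro d hd
      exact haper j₀ d fun n hn1 hn2 => hd n ⟨hn1, hn2⟩
  obtain ⟨N₀, hN₀⟩ := hA_cof
  -- reachability for the product chain
  have hreach : ∀ x : I × I, x ≠ b → ∃ n, 0 < kpow K n b x := by
    intro x _
    obtain ⟨n₁, hn₁1, hn₁⟩ := hirr j₀ x.1
    obtain ⟨n₂, hn₂1, hn₂⟩ := hirr j₀ x.2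
    refine ⟨N₀ + n₂ + n₁, ?_⟩
    have hpos1 : 0 < kpow Pe (N₀ + n₂ + n₁) j₀ x.1 := by
      rw [kpow_add Pe (N₀ + n₂) n₁ j₀ x.1]
      have hA1 : (N₀ + n₂) ∈ A := hN₀ _ (by omega)
      calc (0:ℝ≥0∞) < kpow Pe (N₀ + n₂) j₀ j₀ * kpow Pe n₁ j₀ x.1 :=
            CanonicallyOrderedAdd.mul_pos.mpr
              ⟨(hpos_iff _ hA1.1 j₀ j₀).mpr hA1.2, (hpos_iff _ hn₁1 j₀ x.1).mpr hn₁⟩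
        _ ≤ _ := ENNReal.le_tsum j₀
    have hpos2 : 0 < kpow Pe (N₀ + n₂ + n₁) j₀ x.2 := by
      have heq : N₀ + n₂ + n₁ = (N₀ + n₁) + n₂ := by omega
      rw [heq, kpow_add Pe (N₀ + n₁) n₂ j₀ x.2]
      have hA1 : (N₀ + n₁) ∈ A := hN₀ _ (by omega)
      calc (0:ℝ≥0∞) < kpow Pe (N₀ + n₁) j₀ j₀ * kpow Pe n₂ j₀ x.2 :=
            CanonicallyOrderedAdd.mul_pos.mpr
              ⟨(hpos_iff _ hA1.1 j₀ j₀).mpr hA1.2, (hpos_iff _ hn₂1 j₀ x.2).mpr hn₂⟩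
        _ ≤ _ := ENNReal.le_tsum j₀
    rw [hkpow_prod]
    exact CanonicallyOrderedAdd.mul_pos.mpr ⟨hpos1, hpos2⟩
  -- survival probabilities tend to zero
  have hu0 : ∀ x : I × I, Filter.Tendsto (fun n => usurv K b n x) Filter.atTop (nhds 0) :=
    usurv_tendsto_zero K b hK_row μ hμ1 hμinv hb hreach
  -- one-step expansions with the product chain
  have hKproj1 : ∀ (x : I × I) (f : I → ℝ≥0∞),
      ∑' (y : I × I), K x y * f y.1 = ∑' k, Pe x.1 k * f k := by
    intro x f
    calc ∑' (y : I × I), K x y * f y.1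
        = ∑' (y : I × I), (Pe x.1 y.1 * f y.1) * Pe x.2 y.2 := by
          congr 1; ext y; rw [hK_def]; ring
      _ = (∑' k, Pe x.1 k * f k) * ∑' c, Pe x.2 c :=
          prodsum (fun k => Pe x.1 k * f k) (fun c => Pe x.2 c)
      _ = ∑' k, Pe x.1 k * f k := by rw [hPe_row, mul_one]
  have hKproj2 : ∀ (x : I × I) (f : I → ℝ≥0∞),
      ∑' (y : I × I), K x y * f y.2 = ∑' k, Pe x.2 k * f k := by
    intro x f
    calc ∑' (y : I × I), K x y * f y.2
        = ∑' (y : I × I), Pe x.1 y.1 * (Pe x.2 y.2 * f y.2) := by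
          congr 1; ext y; rw [hK_def]; ring
      _ = (∑' a, Pe x.1 a) * ∑' k, Pe x.2 k * f k :=
          prodsum (fun a => Pe x.1 a) (fun k => Pe x.2 k * f k)
      _ = ∑' k, Pe x.2 k * f k := by rw [hPe_row, one_mul]
  have hfs : ∀ n (a : I) (j : I), kpow Pe (n+1) a j = ∑' k, Pe a k * kpow Pe n k j := by
    intro n a j
    have h := kpow_add Pe 1 n a j
    rw [Nat.add_comm 1 n] at h
    rw [h]
    congr 1; ext k; rw [kpow_one]
  -- coupling inequality
  have hcoup : ∀ n (x : I × I) (j : I),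
      kpow Pe n x.1 j ≤ kpow Pe n x.2 j + usurv K b n x := by
    intro n
    induction n with
    | zero =>
      intro x j
      have h1 : usurv K b 0 x = 1 := by
        unfold usurv
        rw [tsum_eq_single x]
        · rw [taboo_zero]; simp
        · intro z hz
          rw [taboo_zero]
          simp [Ne.symm hz]
      rw [h1]
      calc kpow Pe 0 x.1 j ≤ 1 := kpow_le_one Pe hPe_row 0 x.1 j
        _ ≤ kpow Pe 0 x.2 j + 1 := le_add_self
    | succ n ih =>
      intro x j
      have e1 : kpow Pe (n+1) x.1 j = ∑' (y : I × I), K x y * kpow Pe n y.1 j := by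
        rw [hfs n x.1 j, hKproj1 x (fun k => kpow Pe n k j)]
      have e2 : kpow Pe (n+1) x.2 j = ∑' (y : I × I), K x y * kpow Pe n y.2 j := by
        rw [hfs n x.2 j, hKproj2 x (fun k => kpow Pe n k j)]
      have e3 : usurv K b (n+1) x
          = ∑' (y : I × I), (if y = b then 0 else K x y * usurv K b n y) := by
        have h := usurv_add K b 1 n x
        rw [Nat.add_comm 1 n] at h
        rw [h]
        congr 1; ext z
        rw [taboo_one]
        by_cases hz : z = b <;> simp [hz]
      rw [e1, e2, e3, ← ENNReal.tsum_add]
      refine ENNReal.tsum_le_tsum fun y => ?_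
      by_cases hy : y = b
      · subst hy
        simp [hb_def]
      · simp only [if_neg hy]
        calc K x y * kpow Pe n y.1 j
            ≤ K x y * (kpow Pe n y.2 j + usurv K b n y) := mul_le_mul_right (ih y j) _
          _ = K x y * kpow Pe n y.2 j + K x y * usurv K b n y := mul_add _ _ _
  -- main statement for an arbitrary initial distribution
  have main : ∀ lam : I → ℝ, (∀ i, 0 ≤ lam i) → ∑' i, lam i = 1 →
      ∀ j, Filter.Tendsto (fun n => ∑' i, lam i * Pp n i j) Filter.atTop (nhds (π j)) := by
    intro lam hlam_nonneg hlam_sum j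
    have hlamsumm : Summable lam := by
      by_contra hc
      rw [tsum_eq_zero_of_not_summable hc] at hlam_sum
      norm_num at hlam_sum
    set lame : I → ℝ≥0∞ := fun i => ENNReal.ofReal (lam i) with hlame_def
    have hlame_sum : ∑' i, lame i = 1 := by
      rw [hlame_def, ← ENNReal.ofReal_tsum_of_nonneg hlam_nonneg hlamsumm, hlam_sum,
        ENNReal.ofReal_one]
    set w : I × I → ℝ≥0∞ := fun x => lame x.1 * πe x.2 with hw_def
    have hw1 : ∑' x, w x = 1 := by
      rw [hw_def, prodsum lame πe, hlame_sum, hπe_sum, one_mul]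
    set En : ℕ → ℝ≥0∞ := fun n => ∑' i, lame i * kpow Pe n i j with hEn_def
    have hEn_le1 : ∀ n, En n ≤ 1 := by
      intro n
      calc En n ≤ ∑' i, lame i * 1 :=
            ENNReal.tsum_le_tsum fun i => mul_le_mul_right (kpow_le_one Pe hPe_row n i j) _
        _ = 1 := by simpa using hlame_sum
    set D1 : ℕ → ℝ≥0∞ := fun n => ∑' (x : I × I), w x * usurv K b n x with hD1_def
    set D2 : ℕ → ℝ≥0∞ := fun n => ∑' (x : I × I), w x * usurv K b n (x.2, x.1) with hD2_def
    have hEn_eq : ∀ n, En n = ∑' (x : I × I), w x * kpow Pe n x.1 j := by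
      intro n
      calc En n = (∑' a, lame a * kpow Pe n a j) * ∑' c, πe c := by
            rw [hπe_sum, mul_one]
        _ = ∑' (x : I × I), (lame x.1 * kpow Pe n x.1 j) * πe x.2 :=
            (prodsum (fun a => lame a * kpow Pe n a j) πe).symm
        _ = ∑' (x : I × I), w x * kpow Pe n x.1 j := by
            congr 1; ext x; rw [hw_def]; ring
    have hπe_eq : ∀ n, πe j = ∑' (x : I × I), w x * kpow Pe n x.2 j := by
      intro n
      calc πe j = (∑' a, lame a) * ∑' c, πe c * kpow Pe n c j := by
            rw [hlame_sum, hπe_inv_pow n j, one_mul]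
        _ = ∑' (x : I × I), lame x.1 * (πe x.2 * kpow Pe n x.2 j) :=
            (prodsum lame (fun c => πe c * kpow Pe n c j)).symm
        _ = ∑' (x : I × I), w x * kpow Pe n x.2 j := by
            congr 1; ext x; rw [hw_def]; ring
    have hup : ∀ n, En n ≤ πe j + D1 n := by
      intro n
      rw [hEn_eq n, hπe_eq n, hD1_def, ← ENNReal.tsum_add]
      refine ENNReal.tsum_le_tsum fun x => ?_
      calc w x * kpow Pe n x.1 j
          ≤ w x * (kpow Pe n x.2 j + usurv K b n x) := mul_le_mul_right (hcoup n x j) _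
        _ = w x * kpow Pe n x.2 j + w x * usurv K b n x := mul_add _ _ _
    have hdown : ∀ n, πe j ≤ En n + D2 n := by
      intro n
      rw [hEn_eq n, hπe_eq n, hD2_def, ← ENNReal.tsum_add]
      refine ENNReal.tsum_le_tsum fun x => ?_
      have h := hcoup n (x.2, x.1) j
      calc w x * kpow Pe n x.2 j
          ≤ w x * (kpow Pe n x.1 j + usurv K b n (x.2, x.1)) :=
            mul_le_mul_right h _
        _ = w x * kpow Pe n x.1 j + w x * usurv K b n (x.2, x.1) := mul_add _ _ _
    have hD1_0 : Filter.Tendsto D1 Filter.atTop (nhds 0) :=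
      tsum_weighted_tendsto_zero w hw1 (fun n x => usurv K b n x)
        (fun n x => usurv_le_one K b hK_row n x) hu0
    have hD2_0 : Filter.Tendsto D2 Filter.atTop (nhds 0) :=
      tsum_weighted_tendsto_zero w hw1 (fun n x => usurv K b n (x.2, x.1))
        (fun n x => usurv_le_one K b hK_row n (x.2, x.1)) (fun x => hu0 (x.2, x.1))
    have hD1fin : ∀ n, D1 n ≠ ⊤ := by
      intro n
      have h : D1 n ≤ 1 := by
        calc D1 n ≤ ∑' (x : I × I), w x * 1 :=
              ENNReal.tsum_le_tsum fun x => mul_le_mul_right (usurv_le_one K b hK_row n x) _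
          _ = 1 := by simpa using hw1
      exact fun hc => by simp [hc] at h
    have hD2fin : ∀ n, D2 n ≠ ⊤ := by
      intro n
      have h : D2 n ≤ 1 := by
        calc D2 n ≤ ∑' (x : I × I), w x * 1 :=
              ENNReal.tsum_le_tsum fun x =>
                mul_le_mul_right (usurv_le_one K b hK_row n (x.2, x.1)) _
          _ = 1 := by simpa using hw1
      exact fun hc => by simp [hc] at h
    have hEnfin : ∀ n, En n ≠ ⊤ := fun n hc => by simpa [hc] using hEn_le1 n
    have hπejfin : πe j ≠ ⊤ := fun hc => by simpa [hc] using hπe_le1 j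
    have hfn_eq : ∀ n, 1 ≤ n → (∑' i, lam i * Pp n i j) = (En n).toReal := by
      intro n hn
      have hnn : ∀ i, 0 ≤ lam i * Pp n i j :=
        fun i => mul_nonneg (hlam_nonneg i) ((bridge n hn).2 i j)
      have hsumm : Summable (fun i => lam i * Pp n i j) := by
        refine Summable.of_nonneg_of_le hnn (fun i => ?_) hlamsumm
        calc lam i * Pp n i j ≤ lam i * 1 :=
              mul_le_mul_of_nonneg_left (hPple1 n hn i j) (hlam_nonneg i)
          _ = lam i := mul_one _
      have hofreal : ENNReal.ofReal (∑' i, lam i * Pp n i j) = En n := by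
        rw [ENNReal.ofReal_tsum_of_nonneg hnn hsumm, hEn_def]
        congr 1; ext i
        rw [ENNReal.ofReal_mul (hlam_nonneg i), (bridge n hn).1 i j]
      rw [← hofreal, ENNReal.toReal_ofReal (tsum_nonneg hnn)]
    have hπj_eq : π j = (πe j).toReal := (ENNReal.toReal_ofReal (hπ_nonneg j)).symm
    have habs : ∀ n, 1 ≤ n →
        |(∑' i, lam i * Pp n i j) - π j| ≤ (D1 n).toReal + (D2 n).toReal := by
      intro n hn
      have hD2nn : (0:ℝ) ≤ (D2 n).toReal := ENNReal.toReal_nonneg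
      have hD1nn : (0:ℝ) ≤ (D1 n).toReal := ENNReal.toReal_nonneg
      rw [abs_sub_le_iff]
      constructor
      · have h1 : (En n).toReal ≤ (πe j + D1 n).toReal :=
          ENNReal.toReal_mono (ENNReal.add_ne_top.mpr ⟨hπejfin, hD1fin n⟩) (hup n)
        rw [ENNReal.toReal_add hπejfin (hD1fin n)] at h1
        rw [hfn_eq n hn, hπj_eq]
        linarith
      · have h1 : (πe j).toReal ≤ (En n + D2 n).toReal :=
          ENNReal.toReal_mono (ENNReal.add_ne_top.mpr ⟨hEnfin n, hD2fin n⟩) (hdown n)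
        rw [ENNReal.toReal_add (hEnfin n) (hD2fin n)] at h1
        rw [hfn_eq n hn, hπj_eq]
        linarith
    have hDto : Filter.Tendsto (fun n => (D1 n).toReal + (D2 n).toReal)
        Filter.atTop (nhds 0) := by
      have t1 : Filter.Tendsto (fun n => (D1 n).toReal) Filter.atTop (nhds 0) := by
        have h := (ENNReal.tendsto_toReal (a := 0) (by simp)).comp hD1_0
        simpa [Function.comp_def] using h
      have t2 : Filter.Tendsto (fun n => (D2 n).toReal) Filter.atTop (nhds 0) := by
        have h := (ENNReal.tendsto_toReal (a := 0) (by simp)).comp hD2_0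
        simpa [Function.comp_def] using h
      simpa using t1.add t2
    have habs' : Filter.Tendsto (fun n => |(∑' i, lam i * Pp n i j) - π j|)
        Filter.atTop (nhds 0) := by
      refine squeeze_zero' (Filter.Eventually.of_forall fun n => abs_nonneg _) ?_ hDto
      filter_upwards [Filter.eventually_ge_atTop 1] with n hn using habs n hn
    rw [tendsto_iff_dist_tendsto_zero]
    simpa [Real.dist_eq] using habs'
  refine ⟨main, ?_⟩
  intro i j
  have h := main (fun k => if k = i then 1 else 0)
    (fun k => by by_cases hk : k = i <;> simp [hk])
    (by rw [tsum_eq_single i (fun k hk => by simp [hk])]; simp) j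
  refine h.congr fun n => ?_
  rw [tsum_eq_single i (fun k hk => by simp [hk])]
  simp
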